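/- Let r ∈ (0,1), N ≥ 1 an integer, and z ∈ ℂ with r < |z| < 1. Then ∑_{j=0}^{N−1} K_r(z·e^{2πij/N}) = N · K_{r^N}(z^N), where K_r denotes the Villat kernel K_r(z) = (1+z)/(1−z) + ∑_{k=1}^∞ (2r^{2k}/(1−r^{2k}))·(z^k − z^{−k}). -/

import Mathlib

open Complex Set Finset

noncomputable def villatK (r : ℝ) (z : ℂ) : ℂ :=
  1 + 2 * ∑' k : ℕ,
    ((z ^ (k + 1) - (r : ℂ) ^ (2 * (k + 1)) * z⁻¹ ^ (k + 1)) /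
      (1 - (r : ℂ) ^ (2 * (k + 1))))

lemma summable_villat (r : ℝ) (hr0 : 0 < r) (hr1 : r < 1) (z : ℂ)
    (hz1 : r < ‖z‖) (hz2 : ‖z‖ < 1) :
    Summable (fun k : ℕ =>
      ((z ^ (k + 1) - (r : ℂ) ^ (2 * (k + 1)) * z⁻¹ ^ (k + 1)) /
        (1 - (r : ℂ) ^ (2 * (k + 1))))) := by
  have hz0 : (0:ℝ) < ‖z‖ := lt_trans hr0 hz1
  have hr2 : r ^ 2 < 1 := by nlinarith
  apply Summable.of_norm_bounded (g := fun k => (‖z‖ ^ (k+1) + r ^ (k+1)) / (1 - r ^ 2))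
  · exact (((summable_geometric_of_lt_one (norm_nonneg z) hz2).comp_injective
      (add_left_injective 1)).add ((summable_geometric_of_lt_one hr0.le hr1).comp_injective
      (add_left_injective 1))).div_const _
  · intro k
    have hden : ‖(1 : ℂ) - (r : ℂ) ^ (2 * (k + 1))‖ = 1 - r ^ (2 * (k + 1)) := by
      have h1 : r ^ (2 * (k + 1)) ≤ 1 := pow_le_one₀ hr0.le hr1.le
      rw [show (1 : ℂ) - (r : ℂ) ^ (2 * (k + 1)) = ((1 - r ^ (2 * (k + 1)) : ℝ) : ℂ) by
        push_cast; ring]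
      rw [Complex.norm_real, Real.norm_eq_abs, _root_.abs_of_nonneg (by linarith : (0:ℝ) ≤ 1 - r ^ (2 * (k + 1)))]
    have hpowle : r ^ (2 * (k + 1)) ≤ r ^ 2 :=
      pow_le_pow_of_le_one hr0.le hr1.le (by nlinarith)
    have hdenlb : 1 - r ^ 2 ≤ ‖(1 : ℂ) - (r : ℂ) ^ (2 * (k + 1))‖ := by
      rw [hden]; linarith
    have hnum : ‖z ^ (k + 1) - (r : ℂ) ^ (2 * (k + 1)) * z⁻¹ ^ (k + 1)‖ ≤
        ‖z‖ ^ (k+1) + r ^ (k+1) := by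
      refine (norm_sub_le _ _).trans ?_
      rw [norm_pow, norm_mul, norm_pow, norm_pow, norm_inv]
      gcongr
      have hrn : ‖(r:ℂ)‖ = r := by simp [abs_of_pos hr0]
      rw [hrn]
      calc r ^ (2 * (k + 1)) * ‖z‖⁻¹ ^ (k + 1) = (r ^ 2 * ‖z‖⁻¹) ^ (k+1) := by
            rw [mul_pow, ← pow_mul]
        _ ≤ r ^ (k+1) := by
            apply pow_le_pow_left₀ (by positivity)
            rw [mul_inv_le_iff₀ hz0]
            nlinarith
    rw [norm_div]
    exact div_le_div₀ (by positivity) hnum (by linarith) hdenlb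

lemma sum_pow_eq (N : ℕ) (hN : 1 ≤ N) (ω : ℂ) (h : ω ^ N = 1) :
    ∑ j ∈ Finset.range N, ω ^ j = if ω = 1 then (N : ℂ) else 0 := by
  split_ifs with h1
  · simp [h1]
  · rw [geom_sum_eq h1, h]; simp

lemma omega_pow (N : ℕ) (hN : 1 ≤ N) (m : ℕ) :
    Complex.exp (2 * Real.pi * Complex.I * m / N) ^ N = 1 := by
  rw [← Complex.exp_nat_mul]
  have hN0 : (N : ℂ) ≠ 0 := Nat.cast_ne_zero.mpr (by omega)
  have : (N : ℂ) * (2 * Real.pi * Complex.I * m / N) = m * (2 * Real.pi * Complex.I) := by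
    field_simp
  rw [this]
  simpa using Complex.exp_int_mul_two_pi_mul_I (m : ℤ)

lemma omega_eq_one_iff (N : ℕ) (hN : 1 ≤ N) (m : ℕ) :
    Complex.exp (2 * Real.pi * Complex.I * m / N) = 1 ↔ N ∣ m := by
  have hN0 : (N : ℂ) ≠ 0 := Nat.cast_ne_zero.mpr (by omega)
  have h2pi : (2 * Real.pi * Complex.I : ℂ) ≠ 0 := by
    simp [Real.pi_ne_zero, Complex.I_ne_zero]
  rw [Complex.exp_eq_one_iff]
  constructor
  · rintro ⟨n, hn⟩
    have hmn : (m : ℂ) = n * N := by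
      field_simp at hn
      have := mul_right_cancel₀ h2pi (by linear_combination (2 * Real.pi * Complex.I) * hn :
        (m : ℂ) * (2 * Real.pi * Complex.I) = (n * N) * (2 * Real.pi * Complex.I))
      exact this
    have : (m : ℤ) = n * N := by exact_mod_cast hmn
    exact Int.natCast_dvd_natCast.mp ⟨n, by rw [this]; ring⟩
  · rintro ⟨t, rfl⟩
    refine ⟨t, ?_⟩
    field_simp
    simp

lemma zeta_pow (N : ℕ) (hN : 1 ≤ N) (j m : ℕ) :
    Complex.exp (2 * Real.pi * Complex.I * j / N) ^ m =
      Complex.exp (2 * Real.pi * Complex.I * m / N) ^ j := by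
  rw [← Complex.exp_nat_mul, ← Complex.exp_nat_mul]
  congr 1
  ring

lemma key_sum (r : ℝ) (N : ℕ) (hN : 1 ≤ N) (z : ℂ) (m : ℕ) :
    ∑ j ∈ Finset.range N,
      (((z * Complex.exp (2 * Real.pi * Complex.I * j / N)) ^ m -
        (r : ℂ) ^ (2 * m) * (z * Complex.exp (2 * Real.pi * Complex.I * j / N))⁻¹ ^ m) /
        (1 - (r : ℂ) ^ (2 * m))) =
    (if N ∣ m then (N : ℂ) else 0) *
      ((z ^ m - (r : ℂ) ^ (2 * m) * z⁻¹ ^ m) / (1 - (r : ℂ) ^ (2 * m))) := by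
  set ω := Complex.exp (2 * Real.pi * Complex.I * m / N) with hω
  have hωN : ω ^ N = 1 := omega_pow N hN m
  have hif : (if ω = 1 then (N : ℂ) else 0) = (if N ∣ m then (N : ℂ) else 0) := by
    by_cases hdvd : N ∣ m
    · rw [if_pos ((omega_eq_one_iff N hN m).mpr hdvd), if_pos hdvd]
    · rw [if_neg (fun h => hdvd ((omega_eq_one_iff N hN m).mp h)), if_neg hdvd]
  have h1 : ∑ j ∈ Finset.range N, (z * Complex.exp (2 * Real.pi * Complex.I * j / N)) ^ m
      = (if N ∣ m then (N : ℂ) else 0) * z ^ m := by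
    calc ∑ j ∈ Finset.range N, (z * Complex.exp (2 * Real.pi * Complex.I * j / N)) ^ m
        = ∑ j ∈ Finset.range N, z ^ m * ω ^ j := by
          refine Finset.sum_congr rfl fun j _ => ?_
          rw [mul_pow, zeta_pow N hN j m, hω]
      _ = z ^ m * ∑ j ∈ Finset.range N, ω ^ j := by rw [Finset.mul_sum]
      _ = (if N ∣ m then (N : ℂ) else 0) * z ^ m := by
          rw [sum_pow_eq N hN ω hωN, hif, mul_comm]
  have hωinvN : ω⁻¹ ^ N = 1 := by rw [inv_pow, hωN, inv_one]
  have hifinv : (if ω⁻¹ = 1 then (N : ℂ) else 0) = (if N ∣ m then (N : ℂ) else 0) := by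
    simpa only [inv_eq_one] using hif
  have h2 : ∑ j ∈ Finset.range N, (z * Complex.exp (2 * Real.pi * Complex.I * j / N))⁻¹ ^ m
      = (if N ∣ m then (N : ℂ) else 0) * z⁻¹ ^ m := by
    calc ∑ j ∈ Finset.range N, (z * Complex.exp (2 * Real.pi * Complex.I * j / N))⁻¹ ^ m
        = ∑ j ∈ Finset.range N, z⁻¹ ^ m * (ω⁻¹) ^ j := by
          refine Finset.sum_congr rfl fun j _ => ?_
          rw [mul_inv, mul_pow, inv_pow (Complex.exp (2 * Real.pi * Complex.I * j / N)) m,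
            zeta_pow N hN j m, ← hω, ← inv_pow]
      _ = z⁻¹ ^ m * ∑ j ∈ Finset.range N, (ω⁻¹) ^ j := by rw [Finset.mul_sum]
      _ = (if N ∣ m then (N : ℂ) else 0) * z⁻¹ ^ m := by
          rw [sum_pow_eq N hN ω⁻¹ hωinvN, hifinv, mul_comm]
  rw [← Finset.sum_div, Finset.sum_sub_distrib, ← Finset.mul_sum, h1, h2]
  ring

theorem villat_kernel_sum_roots_of_unity
    (r : ℝ) (hr : r ∈ Ioo (0:ℝ) 1) (N : ℕ) (hN : 1 ≤ N)
    (z : ℂ) (hz₁ : r < ‖z‖) (hz₂ : ‖z‖ < 1) :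
    (∑ j ∈ Finset.range N,
        villatK r (z * Complex.exp (2 * Real.pi * Complex.I * j / N))) =
      (N : ℂ) * villatK (r ^ N) (z ^ N) := by
  obtain ⟨hr0, hr1⟩ := hr
  have hzeta : ∀ j : ℕ, ‖Complex.exp (2 * Real.pi * Complex.I * j / N)‖ = 1 := by
    intro j
    rw [show (2 * (Real.pi : ℂ) * Complex.I * j / N : ℂ)
        = ((2 * Real.pi * j / N : ℝ) : ℂ) * Complex.I by push_cast; ring]
    exact Complex.norm_exp_ofReal_mul_I _
  have hsum : ∀ j ∈ Finset.range N, Summable (fun k : ℕ =>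
      (((z * Complex.exp (2 * Real.pi * Complex.I * j / N)) ^ (k + 1) -
        (r : ℂ) ^ (2 * (k + 1)) * (z * Complex.exp (2 * Real.pi * Complex.I * j / N))⁻¹ ^ (k + 1)) /
        (1 - (r : ℂ) ^ (2 * (k + 1))))) := by
    intro j _
    exact summable_villat r hr0 hr1 _
      (by rw [norm_mul, hzeta j, mul_one]; exact hz₁)
      (by rw [norm_mul, hzeta j, mul_one]; exact hz₂)
  set G : ℕ → ℂ := fun k => (if N ∣ (k + 1) then (N : ℂ) else 0) *
      ((z ^ (k + 1) - (r : ℂ) ^ (2 * (k + 1)) * z⁻¹ ^ (k + 1)) /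
        (1 - (r : ℂ) ^ (2 * (k + 1)))) with hG
  have hterm : ∀ k : ℕ,
      (∑ j ∈ Finset.range N,
        (((z * Complex.exp (2 * Real.pi * Complex.I * j / N)) ^ (k + 1) -
          (r : ℂ) ^ (2 * (k + 1)) * (z * Complex.exp (2 * Real.pi * Complex.I * j / N))⁻¹ ^ (k + 1)) /
          (1 - (r : ℂ) ^ (2 * (k + 1))))) = G k :=
    fun k => key_sum r N hN z (k + 1)
  set i : ℕ → ℕ := fun s => N * s + (N - 1) with hi
  have hinj : Function.Injective i := by
    intro a b hab
    simp only [hi] at hab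
    exact Nat.eq_of_mul_eq_mul_left (by omega) (Nat.add_right_cancel hab)
  have hsupp : Function.support G ⊆ Set.range i := by
    intro k hk
    by_cases hdvd : N ∣ (k + 1)
    · obtain ⟨t, ht⟩ := hdvd
      match t, ht with
      | 0, ht => omega
      | s + 1, ht =>
        refine ⟨s, ?_⟩
        simp only [hi]
        rw [Nat.mul_succ] at ht
        omega
    · exact absurd (by simp [hG, if_neg hdvd]) hk
  have hidx : ∀ s : ℕ, i s + 1 = N * (s + 1) := by
    intro s
    simp only [hi]
    rw [Nat.mul_succ]
    omega
  have hGi : ∀ s : ℕ, G (i s) = (N : ℂ) *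
      (((z ^ N) ^ (s + 1) - ((r ^ N : ℝ) : ℂ) ^ (2 * (s + 1)) * (z ^ N)⁻¹ ^ (s + 1)) /
        (1 - ((r ^ N : ℝ) : ℂ) ^ (2 * (s + 1)))) := by
    intro s
    have e1 : (z ^ N) ^ (s + 1) = z ^ (N * (s + 1)) := (pow_mul z N (s + 1)).symm
    have e2 : ((r ^ N : ℝ) : ℂ) ^ (2 * (s + 1)) = (r : ℂ) ^ (2 * (N * (s + 1))) := by
      push_cast
      rw [← pow_mul]
      congr 1
      ring
    have e3 : (z ^ N)⁻¹ ^ (s + 1) = z⁻¹ ^ (N * (s + 1)) := by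
      rw [inv_pow, ← pow_mul, ← inv_pow]
    simp only [hG, hidx s, if_pos (Dvd.intro (s + 1) rfl)]
    rw [e1, e2, e3]
  simp only [villatK]
  rw [Finset.sum_add_distrib, Finset.sum_const, Finset.card_range, ← Finset.mul_sum,
    ← Summable.tsum_finsetSum hsum, tsum_congr hterm, ← hinj.tsum_eq hsupp, tsum_congr hGi,
    tsum_mul_left, nsmul_eq_mul, mul_one]
  ring
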